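/- For every p ∈ [1,∞] there exists a constant C (depending on u⁰, G, H, T, d, p and κ) such that for all ε ∈ (0,1] and all measurable functions w, ς : D_T → ℝ with sup_{z ∈ D_T} |w(z)| ≤ ε^{−d/2} and ς ∈ L^p(D_T): ‖R_ε(w,ς)‖_{L^p(D_T)} ≤ C ε^κ (1 + ε^β ‖w‖_∞)³ (‖ς‖_{L^p(D_T)} + 1). -/

import Mathlib

open Real MeasureTheory ENNReal

/-- Space-time `ℝ × ℝ^d`. -/
abbrev SpaceTime (d : ℕ) := ℝ × EuclideanSpace ℝ (Fin d)

/-- The space-time domain `D_T = [0,T] × [0,1]^d`. -/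
def domDT (d : ℕ) (T : ℝ) : Set (SpaceTime d) :=
  Set.Icc 0 T ×ˢ {x : EuclideanSpace ℝ (Fin d) | ∀ i, x i ∈ Set.Icc (0 : ℝ) 1}

/-- The remainder
`R_ε(w,ς)(z) = ε^{d/2} w(z)² ∫₀¹ H''(u⁰(z)+sε^{d/2}w(z))(1-s) ds
  + (ε^{3d/2-α}/2) w(z)³ (∫₀¹ G'''(u⁰(z)+sε^{d/2}w(z))(1-s)² ds) ς(z)`. -/
noncomputable def remR (d : ℕ) (u0 : SpaceTime d → ℝ) (H G : ℝ → ℝ) (a : ℝ)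
    (ε : ℝ) (w ς : SpaceTime d → ℝ) (z : SpaceTime d) : ℝ :=
  ε ^ ((d : ℝ) / 2) * (w z) ^ 2 *
      (∫ s in (0 : ℝ)..1, iteratedDeriv 2 H (u0 z + s * ε ^ ((d : ℝ) / 2) * w z) * (1 - s))
    + ε ^ (3 * (d : ℝ) / 2 - a) / 2 * (w z) ^ 3 *
        (∫ s in (0 : ℝ)..1,
          iteratedDeriv 3 G (u0 z + s * ε ^ ((d : ℝ) / 2) * w z) * (1 - s) ^ 2) * ς z

lemma domDT_compact (d : ℕ) (T : ℝ) : IsCompact (domDT d T) := by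
  apply IsCompact.prod isCompact_Icc
  have h := isCompact_univ_pi (fun _ : Fin d => isCompact_Icc (a := (0:ℝ)) (b := 1))
  have he : {x : EuclideanSpace ℝ (Fin d) | ∀ i, x i ∈ Set.Icc (0:ℝ) 1}
      = (EuclideanSpace.equiv (Fin d) ℝ).toHomeomorph ⁻¹'
        (Set.univ.pi fun _ => Set.Icc (0:ℝ) 1) := by
    ext x
    simp only [Set.mem_setOf_eq, Set.mem_preimage, Set.mem_pi, Set.mem_univ, true_implies]
    exact Iff.rfl
  rw [he]
  exact (EuclideanSpace.equiv (Fin d) ℝ).toHomeomorph.isCompact_preimage.2 h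

set_option maxHeartbeats 1000000 in
theorem stmt18 (d : ℕ) (hd : d = 2 ∨ d = 3) (T : ℝ) (hT : 0 < T)
    (u0 : SpaceTime d → ℝ) (hu0 : Continuous u0)
    (H G : ℝ → ℝ) (hH : ContDiff ℝ 4 H) (hG : ContDiff ℝ 5 G)
    (κ : ℝ) (hκ : κ ∈ Set.Ioo (0 : ℝ) (1 / 4)) (a b : ℝ)
    (hab : (d = 2 ∧ a = 9 / 4 ∧ b = 1 / 4 - κ / 3) ∨
           (d = 3 ∧ a = 11 / 4 ∧ b = 7 / 12 - κ / 3))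
    (p : ℝ≥0∞) (hp : 1 ≤ p) :
    ∃ C : ℝ, ∀ ε ∈ Set.Ioc (0 : ℝ) 1, ∀ w ς : SpaceTime d → ℝ,
      Measurable w → Measurable ς →
      (∀ z ∈ domDT d T, |w z| ≤ ε ^ (-(d : ℝ) / 2)) →
      MemLp ς p (volume.restrict (domDT d T)) →
      eLpNorm (remR d u0 H G a ε w ς) p (volume.restrict (domDT d T))
        ≤ ENNReal.ofReal
            (C * ε ^ κ * (1 + ε ^ b * ⨆ z : domDT d T, |w z.1|) ^ 3) *
          (eLpNorm ς p (volume.restrict (domDT d T)) + 1) := by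
  obtain ⟨hκ0, hκ4⟩ := hκ
  have hKc : IsCompact (domDT d T) := domDT_compact d T
  have hKmeas : MeasurableSet (domDT d T) := hKc.isClosed.measurableSet
  have hz0 : ((0:ℝ), (0 : EuclideanSpace ℝ (Fin d))) ∈ domDT d T := by
    refine ⟨Set.mem_Icc.2 ⟨le_rfl, hT.le⟩, fun i => ?_⟩
    simp [Set.mem_Icc]
  obtain ⟨R, hR⟩ := hKc.exists_bound_of_continuousOn hu0.continuousOn
  have hR0 : 0 ≤ R := le_trans (norm_nonneg _) (hR _ hz0)
  obtain ⟨MH, hMH⟩ := (isCompact_Icc (a := -(R+1)) (b := R+1)).exists_bound_of_continuousOn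
    ((hH.continuous_iteratedDeriv 2 (by norm_num)).continuousOn)
  obtain ⟨MG, hMG⟩ := (isCompact_Icc (a := -(R+1)) (b := R+1)).exists_bound_of_continuousOn
    ((hG.continuous_iteratedDeriv 3 (by norm_num)).continuousOn)
  have hMH0 : 0 ≤ MH := le_trans (norm_nonneg _) (hMH 0 (by constructor <;> linarith))
  have hMG0 : 0 ≤ MG := le_trans (norm_nonneg _) (hMG 0 (by constructor <;> linarith))
  set M : ℝ := max MH (MG/2) with hM
  have hM0 : 0 ≤ M := le_trans hMH0 (le_max_left _ _)
  have hvolK : volume (domDT d T) ≠ ⊤ := hKc.measure_lt_top.ne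
  set V : ℝ := (volume (domDT d T)).toReal + 1 with hV
  have hV1 : (1:ℝ) ≤ V := by
    have := ENNReal.toReal_nonneg (a := volume (domDT d T)); linarith
  -- exponent facts
  have hE1 : κ + 2*b ≤ (d:ℝ)/2 := by
    rcases hab with ⟨hd', ha, hb⟩ | ⟨hd', ha, hb⟩ <;> subst hd' <;> subst hb <;>
      push_cast <;> linarith
  have hE2 : 3*(d:ℝ)/2 - a = κ + 3*b := by
    rcases hab with ⟨hd', ha, hb⟩ | ⟨hd', ha, hb⟩ <;> subst hd' <;> subst ha <;> subst hb <;>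
      push_cast <;> ring
  refine ⟨M * V, ?_⟩
  intro ε hε w ς hwm hςm hwbd hςLp
  obtain ⟨hε0, hε1⟩ := hε
  set μr := volume.restrict (domDT d T) with hμr
  set S := ⨆ z : domDT d T, |w z.1| with hS
  have hbdd : BddAbove (Set.range fun z : domDT d T => |w z.1|) := by
    refine ⟨ε ^ (-(d:ℝ)/2), ?_⟩
    rintro x ⟨z, rfl⟩
    exact hwbd z.1 z.2
  have hSle : ∀ z ∈ domDT d T, |w z| ≤ S := fun z hz => le_ciSup hbdd ⟨z, hz⟩
  have hS0 : 0 ≤ S := le_trans (abs_nonneg _) (hSle _ hz0)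
  -- argument stays in the compact interval
  have harg : ∀ z ∈ domDT d T, ∀ s ∈ Set.uIoc (0:ℝ) 1,
      u0 z + s * ε ^ ((d:ℝ)/2) * w z ∈ Set.Icc (-(R+1)) (R+1) := by
    intro z hz s hs
    rw [Set.uIoc_of_le zero_le_one] at hs
    have h1 : ε ^ ((d:ℝ)/2) * |w z| ≤ 1 := by
      calc ε ^ ((d:ℝ)/2) * |w z| ≤ ε ^ ((d:ℝ)/2) * ε ^ (-(d:ℝ)/2) :=
            mul_le_mul_of_nonneg_left (hwbd z hz) (rpow_nonneg hε0.le _)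
        _ = 1 := by
            rw [← Real.rpow_add hε0]
            have hz : (d:ℝ)/2 + -(d:ℝ)/2 = 0 := by ring
            rw [show (d:ℝ)/2 + -(d:ℝ)/2 = 0 from by ring, Real.rpow_zero]
    have h2 : |u0 z| ≤ R := by have := hR z hz; rwa [Real.norm_eq_abs] at this
    have h3 : |s * ε ^ ((d:ℝ)/2) * w z| ≤ 1 := by
      rw [abs_mul, abs_mul, abs_of_nonneg (rpow_nonneg hε0.le _)]
      have hs1 : |s| ≤ 1 := by rw [abs_of_pos hs.1]; exact hs.2
      have : |s| * (ε ^ ((d:ℝ)/2) * |w z|) ≤ 1 * 1 :=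
        mul_le_mul hs1 h1 (by positivity) zero_le_one
      nlinarith
    rw [abs_le] at h2 h3
    constructor <;> linarith [h2.1, h2.2, h3.1, h3.2]
  -- pointwise bound
  have hpt : ∀ z ∈ domDT d T,
      |remR d u0 H G a ε w ς z| ≤ M * ε ^ κ * (1 + ε ^ b * S)^3 * (1 + |ς z|) := by
    intro z hz
    unfold remR
    set IH : ℝ := ∫ s in (0 : ℝ)..1,
      iteratedDeriv 2 H (u0 z + s * ε ^ ((d : ℝ) / 2) * w z) * (1 - s) with hIHdef
    set IG : ℝ := ∫ s in (0 : ℝ)..1,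
      iteratedDeriv 3 G (u0 z + s * ε ^ ((d : ℝ) / 2) * w z) * (1 - s) ^ 2 with hIGdef
    have hIH : |IH| ≤ MH := by
      rw [hIHdef]
      have h := intervalIntegral.norm_integral_le_of_norm_le_const (C := MH)
        (f := fun s => iteratedDeriv 2 H (u0 z + s * ε ^ ((d:ℝ)/2) * w z) * (1-s))
        (a := 0) (b := 1) ?_
      · rw [Real.norm_eq_abs] at h; simpa using h
      · intro s hs
        have hb1 := hMH _ (harg z hz s hs)
        rw [Set.uIoc_of_le zero_le_one] at hs
        rw [Real.norm_eq_abs, abs_mul]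
        have h1s : |1 - s| ≤ 1 := by rw [abs_le]; constructor <;> linarith [hs.1, hs.2]
        rw [Real.norm_eq_abs] at hb1
        calc |iteratedDeriv 2 H (u0 z + s * ε ^ ((d:ℝ)/2) * w z)| * |1 - s| ≤ MH * 1 :=
              mul_le_mul hb1 h1s (abs_nonneg _) hMH0
          _ = MH := mul_one _
    have hIG : |IG| ≤ MG := by
      rw [hIGdef]
      have h := intervalIntegral.norm_integral_le_of_norm_le_const (C := MG)
        (f := fun s => iteratedDeriv 3 G (u0 z + s * ε ^ ((d:ℝ)/2) * w z) * (1-s)^2)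
        (a := 0) (b := 1) ?_
      · rw [Real.norm_eq_abs] at h; simpa using h
      · intro s hs
        have hb1 := hMG _ (harg z hz s hs)
        rw [Set.uIoc_of_le zero_le_one] at hs
        rw [Real.norm_eq_abs, abs_mul]
        have h1s : |(1 - s)^2| ≤ 1 := by
          rw [abs_le]; constructor <;> nlinarith [hs.1, hs.2]
        rw [Real.norm_eq_abs] at hb1
        calc |iteratedDeriv 3 G (u0 z + s * ε ^ ((d:ℝ)/2) * w z)| * |(1-s)^2| ≤ MG * 1 :=
              mul_le_mul hb1 h1s (abs_nonneg _) hMG0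
          _ = MG := mul_one _
    have hw2 : (w z)^2 ≤ S^2 := by
      have := hSle z hz
      nlinarith [abs_nonneg (w z), sq_abs (w z)]
    have hw3 : |w z|^3 ≤ S^3 := pow_le_pow_left₀ (abs_nonneg _) (hSle z hz) 3
    have h2b : (ε ^ b)^2 = ε ^ (2*b) := by
      rw [← Real.rpow_natCast (ε ^ b) 2, ← Real.rpow_mul hε0.le]
      norm_num [mul_comm]
    have h3b : (ε ^ b)^3 = ε ^ (3*b) := by
      rw [← Real.rpow_natCast (ε ^ b) 3, ← Real.rpow_mul hε0.le]
      norm_num [mul_comm]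
    have e1 : ε ^ ((d:ℝ)/2) ≤ ε ^ κ * (ε ^ b)^2 := by
      have h := Real.rpow_le_rpow_of_exponent_ge hε0 hε1 hE1
      rw [h2b, ← Real.rpow_add hε0]
      exact h
    have e2 : ε ^ (3*(d:ℝ)/2 - a) = ε ^ κ * (ε ^ b)^3 := by
      rw [hE2, h3b, ← Real.rpow_add hε0]
    set t := ε ^ b * S with ht
    have ht0 : 0 ≤ t := mul_nonneg (rpow_nonneg hε0.le _) hS0
    have hεκ0 : (0:ℝ) ≤ ε ^ κ := rpow_nonneg hε0.le _
    have hεd0 : (0:ℝ) ≤ ε ^ ((d:ℝ)/2) := rpow_nonneg hε0.le _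
    have hεa0 : (0:ℝ) ≤ ε ^ (3*(d:ℝ)/2 - a) := rpow_nonneg hε0.le _
    have hεb0 : (0:ℝ) ≤ ε ^ b := rpow_nonneg hε0.le _
    have hcub2 : (ε ^ b)^2 * S^2 ≤ (1 + t)^3 := by
      rw [← mul_pow, ← ht]; nlinarith [ht0]
    have hcub3 : (ε ^ b)^3 * S^3 ≤ (1 + t)^3 := by
      rw [← mul_pow, ← ht]; nlinarith [ht0]
    have hA : |ε ^ ((d:ℝ)/2) * (w z)^2 * IH| ≤ MH * (ε ^ κ * (1 + t)^3) := by
      rw [abs_mul, abs_mul, abs_of_nonneg hεd0, abs_of_nonneg (sq_nonneg _)]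
      have h1 : ε ^ ((d:ℝ)/2) * (w z)^2 ≤ ε ^ κ * (ε ^ b)^2 * S^2 :=
        mul_le_mul e1 hw2 (sq_nonneg _) (by positivity)
      have h2 : ε ^ ((d:ℝ)/2) * (w z)^2 * |IH| ≤ ε ^ κ * (ε ^ b)^2 * S^2 * MH :=
        mul_le_mul h1 hIH (abs_nonneg _) (by positivity)
      refine h2.trans ?_
      nlinarith [mul_le_mul_of_nonneg_left hcub2 (mul_nonneg hMH0 hεκ0)]
    have hB : |ε ^ (3*(d:ℝ)/2 - a) / 2 * (w z)^3 * IG * ς z|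
        ≤ MG / 2 * (ε ^ κ * (1 + t)^3) * |ς z| := by
      rw [abs_mul, abs_mul, abs_mul, abs_div, abs_of_nonneg hεa0, abs_pow,
        abs_of_nonneg (by norm_num : (0:ℝ) ≤ 2)]
      apply mul_le_mul_of_nonneg_right _ (abs_nonneg (ς z))
      have h1 : ε ^ (3*(d:ℝ)/2 - a) / 2 * |w z|^3 ≤ ε ^ (3*(d:ℝ)/2 - a) / 2 * S^3 :=
        mul_le_mul_of_nonneg_left hw3 (by positivity)
      have h2 : ε ^ (3*(d:ℝ)/2 - a) / 2 * |w z|^3 * |IG|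
          ≤ ε ^ (3*(d:ℝ)/2 - a) / 2 * S^3 * MG :=
        mul_le_mul h1 hIG (abs_nonneg _) (by positivity)
      refine h2.trans ?_
      rw [e2]
      nlinarith [mul_le_mul_of_nonneg_left hcub3 (mul_nonneg hMG0 hεκ0)]
    have hcomb : MH * (ε ^ κ * (1 + t)^3) + MG / 2 * (ε ^ κ * (1 + t)^3) * |ς z|
        ≤ M * ε ^ κ * (1 + t)^3 * (1 + |ς z|) := by
      have hP : (0:ℝ) ≤ ε ^ κ * (1 + t)^3 := by positivity
      have h1 : MH * (ε ^ κ * (1 + t)^3) ≤ M * (ε ^ κ * (1 + t)^3) :=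
        mul_le_mul_of_nonneg_right (le_max_left _ _) hP
      have h2 : MG / 2 * (ε ^ κ * (1 + t)^3) * |ς z| ≤ M * (ε ^ κ * (1 + t)^3) * |ς z| :=
        mul_le_mul_of_nonneg_right (mul_le_mul_of_nonneg_right (le_max_right _ _) hP)
          (abs_nonneg _)
      nlinarith [abs_nonneg (ς z)]
    calc |ε ^ ((d:ℝ)/2) * (w z)^2 * IH + ε ^ (3*(d:ℝ)/2 - a) / 2 * (w z)^3 * IG * ς z|
        ≤ |ε ^ ((d:ℝ)/2) * (w z)^2 * IH| + |ε ^ (3*(d:ℝ)/2 - a) / 2 * (w z)^3 * IG * ς z| :=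
          abs_add_le _ _
      _ ≤ MH * (ε ^ κ * (1 + t)^3) + MG / 2 * (ε ^ κ * (1 + t)^3) * |ς z| := add_le_add hA hB
      _ ≤ M * ε ^ κ * (1 + t)^3 * (1 + |ς z|) := hcomb
  -- eLpNorm chain
  set c : ℝ := M * ε ^ κ * (1 + ε ^ b * S)^3 with hc
  have hc0 : 0 ≤ c := by positivity
  have step1 : eLpNorm (remR d u0 H G a ε w ς) p μr
      ≤ eLpNorm (fun z => c * (1 + ‖ς z‖)) p μr := by
    apply eLpNorm_mono_ae
    refine (ae_restrict_iff' hKmeas).2 (Filter.Eventually.of_forall fun z hz => ?_)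
    simp only [Real.norm_eq_abs]
    exact (hpt z hz).trans (le_abs_self _)
  have step2 : eLpNorm (fun z => c * (1 + ‖ς z‖)) p μr
      ≤ ENNReal.ofReal c * eLpNorm (fun z => 1 + ‖ς z‖) p μr := by
    have h := eLpNorm_const_smul_le (c := c) (f := fun z : SpaceTime d => 1 + ‖ς z‖)
      (p := p) (μ := μr)
    have hcoe : ‖c‖ₑ = ENNReal.ofReal c := by
      rw [Real.enorm_eq_ofReal hc0]
    calc eLpNorm (fun z => c * (1 + ‖ς z‖)) p μr
        = eLpNorm (c • fun z : SpaceTime d => 1 + ‖ς z‖) p μr := rfl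
      _ ≤ ‖c‖ₑ * eLpNorm (fun z : SpaceTime d => 1 + ‖ς z‖) p μr := h
      _ = ENNReal.ofReal c * eLpNorm (fun z : SpaceTime d => 1 + ‖ς z‖) p μr := by
          rw [hcoe]
  have step3 : eLpNorm (fun z : SpaceTime d => 1 + ‖ς z‖) p μr
      ≤ ENNReal.ofReal V + eLpNorm ς p μr := by
    have hadd := eLpNorm_add_le (μ := μr) (p := p)
      (f := fun _ : SpaceTime d => (1:ℝ)) (g := fun z => ‖ς z‖)
      aestronglyMeasurable_const hςLp.aestronglyMeasurable.norm hp
    have h1 : eLpNorm (fun _ : SpaceTime d => (1:ℝ)) p μr ≤ ENNReal.ofReal V := by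
      have h := eLpNorm_le_of_ae_bound (f := fun _ : SpaceTime d => (1:ℝ)) (p := p)
        (μ := μr) (C := 1) (Filter.Eventually.of_forall fun _ => by norm_num)
      rw [ENNReal.ofReal_one, mul_one] at h
      refine h.trans ?_
      have hofV : ENNReal.ofReal V = volume (domDT d T) + 1 := by
        rw [hV, ENNReal.ofReal_add ENNReal.toReal_nonneg zero_le_one,
          ENNReal.ofReal_toReal hvolK, ENNReal.ofReal_one]
      rw [hμr, Measure.restrict_apply_univ, hofV]
      have hq1 : p.toReal⁻¹ ≤ 1 := by
        by_cases hptop : p = ⊤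
        · simp [hptop]
        · have h1p : (1:ℝ) ≤ p.toReal := by
            have := ENNReal.toReal_mono hptop hp
            simpa using this
          exact inv_le_one_of_one_le₀ h1p
      rcases le_total (volume (domDT d T)) 1 with h' | h'
      · calc volume (domDT d T) ^ p.toReal⁻¹ ≤ 1 ^ p.toReal⁻¹ :=
              ENNReal.rpow_le_rpow h' (by positivity)
          _ = 1 := ENNReal.one_rpow _
          _ ≤ _ := le_add_self
      · calc volume (domDT d T) ^ p.toReal⁻¹ ≤ volume (domDT d T) ^ (1:ℝ) :=
              ENNReal.rpow_le_rpow_of_exponent_le h' hq1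
          _ = volume (domDT d T) := ENNReal.rpow_one _
          _ ≤ _ := le_self_add
    calc eLpNorm (fun z : SpaceTime d => 1 + ‖ς z‖) p μr
        ≤ eLpNorm (fun _ : SpaceTime d => (1:ℝ)) p μr + eLpNorm (fun z => ‖ς z‖) p μr := hadd
      _ = eLpNorm (fun _ : SpaceTime d => (1:ℝ)) p μr + eLpNorm ς p μr := by
          rw [eLpNorm_norm]
      _ ≤ ENNReal.ofReal V + eLpNorm ς p μr := add_le_add_left h1 _
  have step4 : ENNReal.ofReal c * (ENNReal.ofReal V + eLpNorm ς p μr)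
      ≤ ENNReal.ofReal (M * V * ε ^ κ * (1 + ε ^ b * S)^3) * (eLpNorm ς p μr + 1) := by
    have hcv : ENNReal.ofReal (M * V * ε ^ κ * (1 + ε ^ b * S)^3)
        = ENNReal.ofReal c * ENNReal.ofReal V := by
      rw [← ENNReal.ofReal_mul hc0]
      congr 1
      rw [hc]; ring
    rw [hcv, mul_assoc]
    apply mul_le_mul_right
    have h1V : (1:ℝ≥0∞) ≤ ENNReal.ofReal V := by
      rw [ENNReal.one_le_ofReal]; exact hV1
    calc ENNReal.ofReal V + eLpNorm ς p μr
        ≤ ENNReal.ofReal V + ENNReal.ofReal V * eLpNorm ς p μr :=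
          add_le_add_right (le_mul_of_one_le_left' h1V) _
      _ = ENNReal.ofReal V * (eLpNorm ς p μr + 1) := by ring
  calc eLpNorm (remR d u0 H G a ε w ς) p μr
      ≤ eLpNorm (fun z => c * (1 + ‖ς z‖)) p μr := step1
    _ ≤ ENNReal.ofReal c * eLpNorm (fun z : SpaceTime d => 1 + ‖ς z‖) p μr := step2
    _ ≤ ENNReal.ofReal c * (ENNReal.ofReal V + eLpNorm ς p μr) := mul_le_mul_right step3 _
    _ ≤ ENNReal.ofReal (M * V * ε ^ κ * (1 + ε ^ b * S)^3) * (eLpNorm ς p μr + 1) := step4
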